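/- Assume n is even, n ≥ 2, and a^2 ≠ c^2. Then: (i) {X ∈ F_{q^2} : f(X) = 0} = {X : X^q = X}, which has exactly q elements; (ii) exactly (q−1)/𝔤(n) of the q−1 nonzero elements u with u^q = u have f^{-1}(u) nonempty; (iii) for each such u one has #f^{-1}(u) = 𝔤(n); (iv) every Y ∈ F_{q^2} with f(Y) ≠ 0 and f(f(Y)) = 0 has f^{-1}(Y) = ∅. -/

import Mathlib

open Polynomial

private lemma exists_primRoot (F : Type*) [Field F] [Fintype F] :
    ∃ ζ : F, IsPrimitiveRoot ζ (Fintype.card F - 1) := by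
  classical
  obtain ⟨g, hg⟩ := IsCyclic.exists_generator (α := Fˣ)
  refine ⟨(g : F), ?_⟩
  have hord : orderOf ((g : Fˣ) : F) = Fintype.card F - 1 := by
    rw [orderOf_units, orderOf_eq_card_of_forall_mem_zpowers hg, Nat.card_eq_fintype_card,
      Fintype.card_units]
  exact hord ▸ IsPrimitiveRoot.orderOf _

private lemma count_pow_eq_one {F : Type*} [Field F] [Fintype F] (d : ℕ) (hd0 : 0 < d)
    (hd : d ∣ Fintype.card F - 1) : {x : F | x ^ d = 1}.ncard = d := by
  obtain ⟨ζ, hζ⟩ := exists_primRoot F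
  obtain ⟨e, he⟩ := hd
  have hpos : 0 < Fintype.card F - 1 := by
    have := Fintype.one_lt_card (α := F)
    omega
  have hprim_d : IsPrimitiveRoot (ζ ^ e) d := hζ.pow hpos (by rw [he, mul_comm])
  have hset : {x : F | x ^ d = 1} = ↑(nthRootsFinset d (1 : F)) := by
    ext x; simp [Polynomial.mem_nthRootsFinset hd0]
  rw [hset, Set.ncard_coe_finset, hprim_d.card_nthRootsFinset]

theorem stmt_2 (p s q : ℕ) (hp : p.Prime) (hpodd : p ≠ 2) (hs : 0 < s) (hq : q = p ^ s)
    (F : Type*) [Field F] [Fintype F] (hF : Fintype.card F = q ^ 2)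
    (a c : F) (ha : a ^ q = a) (hc : c ^ q = c)
    (n : ℕ) (hn2 : 2 ≤ n) (hneven : Even n)
    (hac : a ^ 2 ≠ c ^ 2)
    (f : F → F) (hf : ∀ X, f X = (c * X ^ q + a * X) * (X ^ q - X) ^ (n - 1)) :
    ({X : F | f X = 0} = {X : F | X ^ q = X} ∧ {X : F | f X = 0}.ncard = q) ∧
    ({u : F | u ≠ 0 ∧ u ^ q = u ∧ (f ⁻¹' {u}).Nonempty}.ncard = (q - 1) / Nat.gcd n (q - 1)) ∧
    (∀ u : F, u ≠ 0 → u ^ q = u → (f ⁻¹' {u}).Nonempty →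
      (f ⁻¹' {u}).ncard = Nat.gcd n (q - 1)) ∧
    (∀ Y : F, f Y ≠ 0 → f (f Y) = 0 → f ⁻¹' {Y} = ∅) := by
  classical
  haveI hpF : Fact p.Prime := ⟨hp⟩
  have hq2 : 2 ≤ q := by
    rw [hq]; exact le_trans hp.two_le (Nat.le_self_pow (by omega) p)
  have hqodd : Odd q := hq ▸ (hp.odd_of_ne_two hpodd).pow
  -- characteristic
  have hcardp : Fintype.card F = p ^ (2 * s) := by rw [hF, hq, ← pow_mul, mul_comm]
  haveI hcharr : CharP F (ringChar F) := ringChar.charP F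
  obtain ⟨m, hm_prime, hm⟩ := FiniteField.card F (ringChar F)
  have hr : ringChar F = p := by
    have h1 : ringChar F ∣ p ^ (2 * s) := by
      rw [← hcardp, hm]; exact dvd_pow_self _ m.pos.ne'
    exact (Nat.prime_dvd_prime_iff_eq hm_prime hp).mp (hm_prime.dvd_of_dvd_pow h1)
  haveI hchar : CharP F p := hr ▸ hcharr
  have h2 : (2 : F) ≠ 0 := by
    intro h
    have h2' : ((2 : ℕ) : F) = 0 := by exact_mod_cast h
    have := (CharP.cast_eq_zero_iff F p 2).mp h2'
    exact hpodd ((Nat.prime_dvd_prime_iff_eq hp Nat.prime_two).mp this)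
  have hneg1 : (-1 : F) ≠ 0 := neg_ne_zero.mpr one_ne_zero
  -- a ≠ ± c
  have hsq : (a - c) * (a + c) ≠ 0 := by
    intro h
    apply hac
    apply sub_eq_zero.mp
    linear_combination h
  have hamc : a - c ≠ 0 := fun h => hsq (by rw [h, zero_mul])
  have hapc : a + c ≠ 0 := fun h => hsq (by rw [h, mul_zero])
  -- Frobenius facts
  have frob_add : ∀ x y : F, (x + y) ^ q = x ^ q + y ^ q := by
    intro x y; rw [hq]; exact add_pow_char_pow ..
  have frob_q : ∀ x : F, (x ^ q) ^ q = x := by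
    intro x
    rw [← pow_mul, show q * q = Fintype.card F by rw [hF]; ring]
    exact FiniteField.pow_card x
  have h2q : (2 : F) ^ q = 2 := by
    have h := frob_add 1 1
    norm_num at h
    exact h
  have hn1odd : Odd (n - 1) := Nat.Even.sub_odd (by omega) hneven odd_one
  have hn1ne : n - 1 ≠ 0 := by omega
  have hamcq : (a - c) ^ q = a - c := by
    rw [sub_eq_add_neg, frob_add, hqodd.neg_pow, ha, hc, ← sub_eq_add_neg]
  -- the constant κ
  set κ : F := (a - c) * (-2) ^ (n - 1) with hκdef
  have hκ : κ ≠ 0 := mul_ne_zero hamc (pow_ne_zero _ (neg_ne_zero.mpr h2))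
  have hκq : κ ^ q = κ := by
    rw [hκdef, mul_pow, hamcq, pow_right_comm, hqodd.neg_pow, h2q]
  -- key Frobenius formula for f
  have key : ∀ X : F, (f X) ^ q = -((c * X + a * X ^ q) * (X ^ q - X) ^ (n - 1)) := by
    intro X
    rw [hf, mul_pow]
    have e1 : (c * X ^ q + a * X) ^ q = c * X + a * X ^ q := by
      rw [frob_add, mul_pow, mul_pow, frob_q, ha, hc]
    have e2 : ((X ^ q - X) ^ (n - 1)) ^ q = -((X ^ q - X) ^ (n - 1)) := by
      rw [pow_right_comm]
      have : (X ^ q - X) ^ q = -(X ^ q - X) := by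
        rw [sub_eq_add_neg, frob_add, hqodd.neg_pow, frob_q]
        ring
      rw [this, hn1odd.neg_pow]
    rw [e1, e2]
    ring
  -- Part (i): zero set
  have hzero : {X : F | f X = 0} = {X : F | X ^ q = X} := by
    ext X
    simp only [Set.mem_setOf_eq, hf]
    constructor
    · intro h
      rcases mul_eq_zero.mp h with h1 | h1
      · have h2' : c * X + a * X ^ q = 0 := by
          have h3 := congrArg (· ^ q) h1
          rw [frob_add, mul_pow, mul_pow, frob_q, ha, hc, zero_pow (by omega : q ≠ 0)] at h3
          exact h3
        have hX : X = 0 := by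
          have h4 : (a - c) * (a + c) * X = 0 := by linear_combination a * h1 - c * h2'
          rcases mul_eq_zero.mp h4 with h5 | h5
          · exact absurd h5 hsq
          · exact h5
        rw [hX, zero_pow (by omega : q ≠ 0)]
      · exact sub_eq_zero.mp (pow_eq_zero_iff hn1ne |>.mp h1)
    · intro h
      rw [sub_eq_zero.mpr h, zero_pow hn1ne, mul_zero]
  -- counting the fixed set
  have hNfact : Fintype.card F - 1 = (q - 1) * (q + 1) := by
    rw [hF]
    obtain ⟨r, hr'⟩ : ∃ r, q = r + 1 := ⟨q - 1, by omega⟩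
    rw [hr', show r + 1 - 1 = r from rfl]
    apply Nat.sub_eq_of_eq_add
    ring
  have hNdvd : q - 1 ∣ Fintype.card F - 1 := hNfact ▸ dvd_mul_right _ _
  have hcount_one : {x : F | x ^ (q - 1) = 1}.ncard = q - 1 :=
    count_pow_eq_one (q - 1) (by omega) hNdvd
  have hfix : {X : F | X ^ q = X} = insert (0 : F) {x : F | x ^ (q - 1) = 1} := by
    ext X
    simp only [Set.mem_setOf_eq, Set.mem_insert_iff]
    constructor
    · intro h
      rcases eq_or_ne X 0 with rfl | hX
      · exact Or.inl rfl
      · right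
        have h5 : X ^ (q - 1) * X = 1 * X := by
          rw [one_mul, ← pow_succ, show q - 1 + 1 = q by omega, h]
        exact mul_right_cancel₀ hX h5
    · rintro (rfl | h)
      · exact zero_pow (by omega : q ≠ 0)
      · calc X ^ q = X ^ (q - 1) * X := by rw [← pow_succ, show q - 1 + 1 = q by omega]
          _ = X := by rw [h, one_mul]
  have hcard_fix : {X : F | X ^ q = X}.ncard = q := by
    rw [hfix, Set.ncard_insert_of_notMem (by
      simp only [Set.mem_setOf_eq, zero_pow (by omega : q - 1 ≠ 0)]
      exact fun h => one_ne_zero h.symm) (Set.toFinite _), hcount_one]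
    omega
  -- values of f on the "negative" set
  have hSval : ∀ X : F, X ^ (q - 1) = -1 → X ≠ 0 ∧ X ^ q = -X ∧ f X = κ * X ^ n := by
    intro X hX
    have hX0 : X ≠ 0 := by
      rintro rfl
      rw [zero_pow (by omega : q - 1 ≠ 0)] at hX
      exact hneg1 hX.symm
    have hXq : X ^ q = -X := by
      calc X ^ q = X ^ (q - 1) * X := by rw [← pow_succ, show q - 1 + 1 = q by omega]
        _ = -X := by rw [hX]; ring
    refine ⟨hX0, hXq, ?_⟩
    rw [hf, hXq, show -X - X = (-2) * X by ring, mul_pow,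
      show c * (-X) + a * X = (a - c) * X by ring, hκdef,
      show X ^ n = X * X ^ (n - 1) by rw [← pow_succ', show n - 1 + 1 = n by omega]]
    ring
  -- preimage characterization
  have hfiber_char : ∀ u : F, u ≠ 0 → u ^ q = u →
      f ⁻¹' {u} = {X : F | X ^ (q - 1) = -1 ∧ κ * X ^ n = u} := by
    intro u hu0 huq
    ext X
    simp only [Set.mem_preimage, Set.mem_singleton_iff, Set.mem_setOf_eq]
    constructor
    · intro hXu
      have hX0 : X ≠ 0 := by
        rintro rfl
        apply hu0
        rw [← hXu, hf, zero_pow (by omega : q ≠ 0)]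
        simp [zero_pow hn1ne]
      have hXqX : X ^ q ≠ X := by
        intro h
        apply hu0
        rw [← hXu, hf, sub_eq_zero.mpr h, zero_pow hn1ne, mul_zero]
      have hpow_ne : (X ^ q - X) ^ (n - 1) ≠ 0 := pow_ne_zero _ (sub_ne_zero.mpr hXqX)
      have h5 : (c * X + a * X ^ q) * (X ^ q - X) ^ (n - 1)
          = -((c * X ^ q + a * X) * (X ^ q - X) ^ (n - 1)) := by
        have e1 : (f X) ^ q = f X := by rw [hXu, huq]
        have e2 := key X
        rw [e1, hf] at e2
        linear_combination e2
      have h6 : c * X + a * X ^ q = -(c * X ^ q + a * X) :=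
        mul_right_cancel₀ hpow_ne (by linear_combination h5)
      have h7 : (a + c) * (X ^ q + X) = 0 := by linear_combination h6
      have hXq : X ^ q = -X := by
        rcases mul_eq_zero.mp h7 with h | h
        · exact absurd h hapc
        · exact eq_neg_of_add_eq_zero_left h
      have hXq1 : X ^ (q - 1) = -1 := by
        have h8 : X ^ (q - 1) * X = (-1) * X := by
          rw [← pow_succ, show q - 1 + 1 = q by omega, hXq]; ring
        exact mul_right_cancel₀ hX0 h8
      refine ⟨hXq1, ?_⟩
      rw [← (hSval X hXq1).2.2]
      exact hXu
    · rintro ⟨h1', h2'⟩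
      rw [(hSval X h1').2.2, h2']
  -- image membership
  have himg_mem : ∀ X : F, X ^ (q - 1) = -1 → f X ≠ 0 ∧ (f X) ^ q = f X := by
    intro X hX
    obtain ⟨hX0, hXq, hfX⟩ := hSval X hX
    refine ⟨by rw [hfX]; exact mul_ne_zero hκ (pow_ne_zero _ hX0), ?_⟩
    rw [hfX, mul_pow, hκq, pow_right_comm, hXq, hneven.neg_pow]
  -- part (iii)
  set g : ℕ := Nat.gcd n (q - 1) with hgdef
  have hg_pos : 0 < g := Nat.gcd_pos_of_pos_right _ (by omega)
  have hgdvd : g ∣ Fintype.card F - 1 := dvd_trans (Nat.gcd_dvd_right n (q - 1)) hNdvd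
  have hK : {y : F | y ^ g = 1}.ncard = g := count_pow_eq_one g hg_pos hgdvd
  have hpart3 : ∀ u : F, u ≠ 0 → u ^ q = u → (f ⁻¹' {u}).Nonempty →
      (f ⁻¹' {u}).ncard = g := by
    intro u hu0 huq hne
    obtain ⟨X₀, hX₀⟩ := hne
    rw [hfiber_char u hu0 huq] at hX₀ ⊢
    obtain ⟨h01, h02⟩ := hX₀
    have hX00 : X₀ ≠ 0 := (hSval X₀ h01).1
    have himg : {X : F | X ^ (q - 1) = -1 ∧ κ * X ^ n = u}
        = (fun y => X₀ * y) '' {y : F | y ^ g = 1} := by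
      ext X
      simp only [Set.mem_setOf_eq, Set.mem_image]
      constructor
      · rintro ⟨hx1, hx2⟩
        refine ⟨X₀⁻¹ * X, ?_, mul_inv_cancel_left₀ hX00 X⟩
        have hy1 : (X₀⁻¹ * X) ^ (q - 1) = 1 := by
          rw [mul_pow, inv_pow, h01, hx1, inv_neg, inv_one]
          ring
        have hyn : (X₀⁻¹ * X) ^ n = 1 := by
          have hXn : X ^ n = X₀ ^ n := mul_left_cancel₀ hκ (hx2.trans h02.symm)
          rw [mul_pow, inv_pow, hXn, inv_mul_cancel₀ (pow_ne_zero _ hX00)]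
        exact orderOf_dvd_iff_pow_eq_one.mp
          (Nat.dvd_gcd (orderOf_dvd_of_pow_eq_one hyn) (orderOf_dvd_of_pow_eq_one hy1))
      · rintro ⟨y, hy, rfl⟩
        have hyq : y ^ (q - 1) = 1 := orderOf_dvd_iff_pow_eq_one.mp
          (dvd_trans (orderOf_dvd_of_pow_eq_one hy) (Nat.gcd_dvd_right n (q - 1)))
        have hyn : y ^ n = 1 := orderOf_dvd_iff_pow_eq_one.mp
          (dvd_trans (orderOf_dvd_of_pow_eq_one hy) (Nat.gcd_dvd_left n (q - 1)))
        constructor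
        · rw [mul_pow, h01, hyq, mul_one]
        · rw [mul_pow, hyn, mul_one, h02]
    rw [himg, Set.ncard_image_of_injective _ (mul_right_injective₀ hX00), hK]
  -- the δ element with δ^(q-1) = -1
  obtain ⟨ζ, hζ⟩ := exists_primRoot F
  have hNpos : 0 < Fintype.card F - 1 := by
    have := Fintype.one_lt_card (α := F); omega
  obtain ⟨t, ht0⟩ := hqodd
  have ht : q = 2 * t + 1 := by omega
  have harith : Fintype.card F - 1 = ((t + 1) * (q - 1)) * 2 := by
    rw [hF, ht, show 2 * t + 1 - 1 = 2 * t from rfl]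
    apply Nat.sub_eq_of_eq_add
    ring
  have h2prim : IsPrimitiveRoot (ζ ^ ((t + 1) * (q - 1))) 2 := hζ.pow hNpos harith
  have hδ : (ζ ^ (t + 1)) ^ (q - 1) = -1 := by
    rw [← pow_mul]
    exact IsPrimitiveRoot.eq_neg_one_of_two_right h2prim
  have hδ0 : ζ ^ (t + 1) ≠ 0 := by
    intro h
    rw [h, zero_pow (by omega : q - 1 ≠ 0)] at hδ
    exact hneg1 hδ.symm
  have hSneg_eq : {x : F | x ^ (q - 1) = -1}
      = (fun y => ζ ^ (t + 1) * y) '' {y : F | y ^ (q - 1) = 1} := by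
    ext x
    simp only [Set.mem_setOf_eq, Set.mem_image]
    constructor
    · intro hx
      refine ⟨(ζ ^ (t + 1))⁻¹ * x, ?_, mul_inv_cancel_left₀ hδ0 x⟩
      rw [mul_pow, inv_pow, hδ, hx, inv_neg, inv_one]
      ring
    · rintro ⟨y, hy, rfl⟩
      rw [mul_pow, hδ, hy, mul_one]
  have hSneg : {x : F | x ^ (q - 1) = -1}.ncard = q - 1 := by
    rw [hSneg_eq, Set.ncard_image_of_injective _ (mul_right_injective₀ hδ0), hcount_one]
  -- part (ii)
  have hUeq : {u : F | u ≠ 0 ∧ u ^ q = u ∧ (f ⁻¹' {u}).Nonempty}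
      = f '' {x : F | x ^ (q - 1) = -1} := by
    ext u
    simp only [Set.mem_setOf_eq, Set.mem_image]
    constructor
    · rintro ⟨hu0, huq, X, hX⟩
      have hX' := hX
      rw [hfiber_char u hu0 huq] at hX'
      exact ⟨X, hX'.1, hX⟩
    · rintro ⟨X, hX, rfl⟩
      obtain ⟨h1', h2'⟩ := himg_mem X hX
      exact ⟨h1', h2', ⟨X, rfl⟩⟩
  set Sf : Finset F := Finset.univ.filter (fun x => x ^ (q - 1) = -1) with hSf
  have hSf_coe : {x : F | x ^ (q - 1) = -1} = ↑Sf := by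
    ext x; simp [hSf]
  have hSf_card : Sf.card = q - 1 := by
    have := hSneg
    rw [hSf_coe, Set.ncard_coe_finset] at this
    exact this
  have hsum : Sf.card = ∑ u ∈ Sf.image f, (Sf.filter fun x => f x = u).card :=
    Finset.card_eq_sum_card_fiberwise (fun x hx => Finset.mem_image_of_mem f hx)
  have hfib : ∀ u ∈ Sf.image f, (Sf.filter fun x => f x = u).card = g := by
    intro u hu
    obtain ⟨X, hXmem, rfl⟩ := Finset.mem_image.mp hu
    have hXS : X ^ (q - 1) = -1 := (Finset.mem_filter.mp hXmem).2
    obtain ⟨hu0, huq⟩ := himg_mem X hXS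
    have hcoe : (↑(Sf.filter fun x => f x = f X) : Set F) = f ⁻¹' {f X} := by
      ext x
      simp only [Finset.coe_filter, Finset.mem_filter, Finset.mem_univ, true_and,
        Set.mem_setOf_eq, Set.mem_preimage, Set.mem_singleton_iff, hSf]
      constructor
      · rintro ⟨-, h⟩; exact h
      · intro h
        have hx : x ∈ f ⁻¹' {f X} := h
        rw [hfiber_char (f X) hu0 huq] at hx
        exact ⟨by simpa using hx.1, h⟩
    have := hpart3 (f X) hu0 huq ⟨X, rfl⟩
    rw [← Set.ncard_coe_finset, hcoe, this]
  have hUcard : {u : F | u ≠ 0 ∧ u ^ q = u ∧ (f ⁻¹' {u}).Nonempty}.ncard = (q - 1) / g := by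
    rw [hUeq, hSf_coe, ← Finset.coe_image, Set.ncard_coe_finset]
    have hql : q - 1 = (Sf.image f).card * g := by
      rw [← hSf_card, hsum, Finset.sum_congr rfl hfib, Finset.sum_const, smul_eq_mul]
    rw [hql, Nat.mul_div_cancel _ hg_pos]
  -- part (iv)
  have hpart4 : ∀ Y : F, f Y ≠ 0 → f (f Y) = 0 → f ⁻¹' {Y} = ∅ := by
    intro Y hY0 hffY
    have hfYq : (f Y) ^ q = f Y := by
      have hmem : f Y ∈ {X : F | f X = 0} := hffY
      rw [hzero] at hmem
      exact hmem
    have hYmem : Y ∈ f ⁻¹' {f Y} := rfl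
    rw [hfiber_char (f Y) hY0 hfYq] at hYmem
    obtain ⟨hY1, -⟩ := hYmem
    obtain ⟨hYne0, hYq, -⟩ := hSval Y hY1
    ext X
    simp only [Set.mem_preimage, Set.mem_singleton_iff, Set.mem_empty_iff_false, iff_false]
    intro hXY
    have hXqX : X ^ q ≠ X := by
      intro h
      apply hYne0
      rw [← hXY, hf, sub_eq_zero.mpr h, zero_pow hn1ne, mul_zero]
    have hpow_ne : (X ^ q - X) ^ (n - 1) ≠ 0 := pow_ne_zero _ (sub_ne_zero.mpr hXqX)
    have h5 : (c * X + a * X ^ q) * (X ^ q - X) ^ (n - 1)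
        = (c * X ^ q + a * X) * (X ^ q - X) ^ (n - 1) := by
      have e1 : (f X) ^ q = -(f X) := by rw [hXY, hYq]
      have e2 := key X
      rw [e1, hf] at e2
      linear_combination e2
    have h6 : c * X + a * X ^ q = c * X ^ q + a * X := mul_right_cancel₀ hpow_ne h5
    have h7 : (a - c) * (X ^ q - X) = 0 := by linear_combination h6
    rcases mul_eq_zero.mp h7 with h | h
    · exact hamc h
    · exact hXqX (sub_eq_zero.mp h)
  exact ⟨⟨hzero, by rw [hzero, hcard_fix]⟩, hUcard, hpart3, hpart4⟩
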